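/- Fix an agent i with concave, strictly increasing utility uᵢ: [0,1]ᵐ → ℝ₊, budget Bᵢ > 0, total budget 𝓑 = Σ Bₖ, and suppose the other agents' total bids Dⱼ = Σ_{k≠i} b_{k,j} are strictly positive for each good j with Σⱼ Dⱼ ≤ 𝓑 − Bᵢ. Then the strategy yⱼ = Bᵢ·Dⱼ/(𝓑 − Bᵢ) is feasible (Σⱼ yⱼ ≤ Bᵢ) and guarantees agent i a fraction yⱼ/(yⱼ + Dⱼ) = Bᵢ/𝓑 of every good j, hence utility at least uᵢ((Bᵢ/𝓑)·𝟙) ≥ (Bᵢ/𝓑)·uᵢ(𝟙). -/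
import Mathlib


/-- Safe strategy in Trading Post: bidding `yⱼ = Bᵢ·Dⱼ/(𝓑−Bᵢ)` is feasible and
secures a fraction `Bᵢ/𝓑` of every good, hence utility at least
`uᵢ((Bᵢ/𝓑)·𝟙) ≥ (Bᵢ/𝓑)·uᵢ(𝟙)`. -/
theorem trading_post_proportional_safe_strategy (m : ℕ)
    (u : (Fin m → ℝ) → ℝ) (Bi 𝓑 : ℝ) (D : Fin m → ℝ)
    (hu_conc : ConcaveOn ℝ (Set.Icc (0 : Fin m → ℝ) 1) u)
    (hu_nonneg : ∀ x ∈ Set.Icc (0 : Fin m → ℝ) 1, 0 ≤ u x)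
    (hu_mono : ∀ x ∈ Set.Icc (0 : Fin m → ℝ) 1,
      ∀ y ∈ Set.Icc (0 : Fin m → ℝ) 1, (∀ j, x j < y j) → u x < u y)
    (hBi : 0 < Bi) (hB : Bi < 𝓑)
    (hD : ∀ j, 0 < D j) (hDsum : ∑ j, D j ≤ 𝓑 - Bi) :
    (∑ j, Bi * D j / (𝓑 - Bi) ≤ Bi) ∧
      (∀ j, (Bi * D j / (𝓑 - Bi)) / (Bi * D j / (𝓑 - Bi) + D j) = Bi / 𝓑) ∧
      ((Bi / 𝓑) • (1 : Fin m → ℝ)) ∈ Set.Icc (0 : Fin m → ℝ) 1 ∧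
      (Bi / 𝓑) * u 1 ≤ u ((Bi / 𝓑) • (1 : Fin m → ℝ)) := by
  have hBB : 0 < 𝓑 - Bi := by linarith
  have h𝓑 : 0 < 𝓑 := by linarith
  have ht0 : 0 ≤ Bi / 𝓑 := le_of_lt (div_pos hBi h𝓑)
  have ht1 : Bi / 𝓑 ≤ 1 := by
    rw [div_le_one h𝓑]; linarith
  refine ⟨?_, ?_, ?_, ?_⟩
  · have : ∑ j, Bi * D j / (𝓑 - Bi) = Bi * (∑ j, D j) / (𝓑 - Bi) := by
      rw [Finset.mul_sum, Finset.sum_div]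
    rw [this, div_le_iff₀ hBB]
    have h := hDsum
    nlinarith
  · intro j
    have hDj := hD j
    have hne : Bi * D j / (𝓑 - Bi) + D j ≠ 0 := by positivity
    field_simp
    ring
  · constructor
    · intro j; simp [Pi.smul_apply]; positivity
    · intro j; simpa using ht1
  · have h1 : (1 : Fin m → ℝ) ∈ Set.Icc (0 : Fin m → ℝ) 1 :=
      ⟨by intro j; norm_num, le_refl _⟩
    have h0 : (0 : Fin m → ℝ) ∈ Set.Icc (0 : Fin m → ℝ) 1 :=
      ⟨le_refl _, by intro j; norm_num⟩
    have key : (Bi / 𝓑) • u 1 + (1 - Bi / 𝓑) • u 0 ≤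
        u ((Bi / 𝓑) • (1 : Fin m → ℝ) + (1 - Bi / 𝓑) • (0 : Fin m → ℝ)) :=
      hu_conc.2 h1 h0 ht0 (by linarith) (by ring)
    have hu0 : 0 ≤ u 0 := hu_nonneg 0 h0
    have : (Bi / 𝓑) • (1 : Fin m → ℝ) + (1 - Bi / 𝓑) • (0 : Fin m → ℝ)
        = (Bi / 𝓑) • (1 : Fin m → ℝ) := by simp
    rw [this] at key
    have := mul_nonneg (by linarith : (0:ℝ) ≤ 1 - Bi / 𝓑) hu0
    calc (Bi / 𝓑) * u 1 ≤ (Bi / 𝓑) * u 1 + (1 - Bi / 𝓑) * u 0 := by linarith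
    _ ≤ u ((Bi / 𝓑) • (1 : Fin m → ℝ)) := by simpa [smul_eq_mul] using key
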